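/- For all integers k ≥ 3 and n with k ≤ n ≤ k(k−1), any edge coloring of K_n whose color classes are all k-partite has at most g_k(n) monochromatic copies of K_k, where g_k(n) = ∏_{j=1}^k s_j for the balanced composition n = s_1 + ⋯ + s_k with each s_j ∈ {⌊n/k⌋, ⌈n/k⌉}. -/

import Mathlib

/-- `g_k(n)` for `n ≤ k(k−1)`: the balanced product `∏ s_j` with each
`s_j ∈ {⌊n/k⌋, ⌈n/k⌉}` summing to `n`. -/
def gkBal (k n : ℕ) : ℕ := (n / k) ^ (k - n % k) * (n / k + 1) ^ (n % k)


def bp (r m : ℕ) : ℕ := (m / r) ^ (r - m % r) * (m / r + 1) ^ (m % r)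

lemma bp_zero_of_lt {r m : ℕ} (h : m < r) : bp r m = 0 := by
  unfold bp
  rw [Nat.div_eq_of_lt h, Nat.mod_eq_of_lt h]
  have : r - m ≠ 0 := by omega
  simp [zero_pow this]

lemma bp_self {r : ℕ} (hr : 1 ≤ r) : bp r r = 1 := by
  unfold bp
  rw [Nat.div_self hr, Nat.mod_self]
  simp

/-- key identity: `q * bp (r-1) (m - q) = bp r m` where `q = m / r`. -/
lemma bp_key (r m : ℕ) (hr : 1 ≤ r) :
    (m / r) * bp (r-1) (m - m / r) = bp r m := by
  rcases Nat.lt_or_ge r 2 with h1 | h2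
  · have hr1 : r = 1 := by omega
    subst hr1
    simp [bp, Nat.mod_one]
  · set q := m / r with hq
    set s := m % r with hs
    have hm : r * q + s = m := Nat.div_add_mod m r
    have hsr : s < r := Nat.mod_lt m (by omega)
    have hqle : q ≤ r * q := Nat.le_mul_of_pos_left q (by omega)
    have hmq : m - q = (r-1) * q + s := by
      have : (r-1) * q = r * q - q := by
        cases r with
        | zero => omega
        | succ r' => simp [Nat.succ_mul]
      omega
    rcases Nat.lt_or_ge s (r-1) with hcase | hcase
    · have hd : (m - q) / (r - 1) = q := by
        rw [hmq, Nat.mul_add_div (by omega), Nat.div_eq_of_lt hcase, Nat.add_zero]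
      have hmo : (m - q) % (r-1) = s := by
        rw [hmq, Nat.mul_add_mod, Nat.mod_eq_of_lt hcase]
      unfold bp
      rw [hd, hmo, ← hq, ← hs]
      have h3 : r - s = ((r-1) - s) + 1 := by omega
      rw [h3, pow_succ]
      ring
    · have hseq : s = r - 1 := by omega
      have hmq2 : m - q = (r-1)*(q+1) := by
        have h5 : (r-1) * (q+1) = (r-1)*q + (r-1) := by ring
        omega
      have hd : (m - q) / (r-1) = q+1 := by
        rw [hmq2, Nat.mul_div_cancel_left _ (by omega : 0 < r - 1)]
      have hmo : (m - q) % (r-1) = 0 := by rw [hmq2, Nat.mul_mod_right]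
      unfold bp
      rw [hd, hmo, ← hq, ← hs, hseq]
      have h1 : r - (r-1) = 1 := by omega
      rw [h1]
      simp

/-- increment identity: `bp r (m+1) = bp r m + bp (r-1) (m - m/r)`. -/
lemma bp_succ (r m : ℕ) (hr : 1 ≤ r) :
    bp r (m+1) = bp r m + bp (r-1) (m - m / r) := by
  rcases Nat.lt_or_ge r 2 with h1 | h2
  · have hr1 : r = 1 := by omega
    subst hr1
    simp [bp, Nat.mod_one]
  · set q := m / r with hq
    set s := m % r with hs
    have hm : r * q + s = m := Nat.div_add_mod m r
    have hsr : s < r := Nat.mod_lt m (by omega)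
    have hqle : q ≤ r * q := Nat.le_mul_of_pos_left q (by omega)
    have hmq : m - q = (r-1) * q + s := by
      have : (r-1) * q = r * q - q := by
        cases r with
        | zero => omega
        | succ r' => simp [Nat.succ_mul]
      omega
    rcases Nat.lt_or_ge (s+1) r with hcase | hcase
    · -- s + 1 < r
      have hd1 : (m + 1) / r = q := by
        have hm1 : m + 1 = r * q + (s+1) := by omega
        rw [hm1, Nat.mul_add_div (by omega), Nat.div_eq_of_lt hcase, Nat.add_zero]
      have hmo1 : (m + 1) % r = s + 1 := by
        have hm1 : m + 1 = r * q + (s+1) := by omega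
        rw [hm1, Nat.mul_add_mod, Nat.mod_eq_of_lt hcase]
      have hd2 : (m - q) / (r - 1) = q := by
        rw [hmq, Nat.mul_add_div (by omega), Nat.div_eq_of_lt (by omega), Nat.add_zero]
      have hmo2 : (m - q) % (r-1) = s := by
        rw [hmq, Nat.mul_add_mod, Nat.mod_eq_of_lt (by omega)]
      unfold bp
      rw [hd1, hmo1, hd2, hmo2, ← hq, ← hs]
      have h3 : r - s = (r - (s+1)) + 1 := by omega
      have h4 : (r-1) - s = r - (s+1) := by omega
      rw [h3, h4, pow_succ, pow_succ]
      ring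
    · -- s + 1 = r
      have hseq : s = r - 1 := by omega
      have hm1 : m + 1 = r * (q+1) := by
        have : r * (q+1) = r*q + r := by ring
        omega
      have hd1 : (m+1) / r = q + 1 := by rw [hm1, Nat.mul_div_cancel_left _ (by omega : 0 < r)]
      have hmo1 : (m+1) % r = 0 := by rw [hm1, Nat.mul_mod_right]
      have hmq2 : m - q = (r-1)*(q+1) := by
        have h5 : (r-1) * (q+1) = (r-1)*q + (r-1) := by ring
        omega
      have hd2 : (m - q) / (r-1) = q+1 := by
        rw [hmq2, Nat.mul_div_cancel_left _ (by omega : 0 < r - 1)]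
      have hmo2 : (m - q) % (r-1) = 0 := by rw [hmq2, Nat.mul_mod_right]
      unfold bp
      rw [hd1, hmo1, hd2, hmo2, ← hq, ← hs, hseq]
      have h1 : r - (r-1) = 1 := by omega
      rw [h1]
      simp
      have h6 : (q+1) ^ r = (q+1)^(r-1) * (q+1) := by
        rw [← pow_succ]
        congr 1
        omega
      rw [h6]
      ring

lemma bp_le_succ (r m : ℕ) (hr : 1 ≤ r) : bp r m ≤ bp r (m+1) := by
  rw [bp_succ r m hr]; exact Nat.le_add_right _ _

lemma bp_mono (r : ℕ) (hr : 1 ≤ r) : Monotone (bp r) :=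
  monotone_nat_of_le_succ (fun m => bp_le_succ r m hr)

lemma sub_div_mono (r : ℕ) (hr : 1 ≤ r) : Monotone (fun m => m - m / r) := by
  apply monotone_nat_of_le_succ
  intro m
  have h1 : (m+1) / r ≤ (m + r) / r := Nat.div_le_div_right (by omega)
  have h2 : (m + r) / r = m / r + 1 := by rw [Nat.add_div_right _ (by omega)]
  have h3 : m / r ≤ m := Nat.div_le_self m r
  have h4 : m / r ≤ (m+1) / r := Nat.div_le_div_right (by omega)
  show m - m / r ≤ (m+1) - (m+1)/r
  omega

/-- ratio identity: `(m/r) * bp r (m+1) = (m/r + 1) * bp r m`. -/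
lemma bp_ratio (r m : ℕ) (hr : 1 ≤ r) :
    (m / r) * bp r (m+1) = (m / r + 1) * bp r m := by
  rw [bp_succ r m hr, Nat.mul_add, bp_key r m hr]
  ring

/-- shifted superadditivity -/
lemma bp_shift (r : ℕ) (hr : 1 ≤ r) (x : ℕ) (hx : r - 1 ≤ x) :
    ∀ y, r - 1 ≤ y → bp r x + bp r y ≤ bp r (x + y - (r-1)) := by
  intro y hy
  induction y, hy using Nat.le_induction with
  | base =>
    rw [bp_zero_of_lt (by omega : r - 1 < r)]
    have : x + (r-1) - (r-1) = x := by omega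
    rw [this]
    omega
  | succ y hy ih =>
    have h1 : bp r (y+1) = bp r y + bp (r-1) (y - y / r) := bp_succ r y hr
    have h2 : x + (y+1) - (r-1) = (x + y - (r-1)) + 1 := by omega
    rw [h1, h2, bp_succ r _ hr]
    have h3 : bp (r-1) (y - y / r) ≤ bp (r-1) ((x+y-(r-1)) - (x+y-(r-1)) / r) := by
      rcases Nat.lt_or_ge r 2 with hr2 | hr2
      · have : r = 1 := by omega
        subst this
        simp [bp]
      · exact bp_mono (r-1) (by omega) (sub_div_mono r hr (by omega : y ≤ x + y - (r-1)))
    have := ih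
    omega

lemma bp_superadd (r : ℕ) (hr : 1 ≤ r) (x y : ℕ) : bp r x + bp r y ≤ bp r (x + y) := by
  rcases Nat.lt_or_ge x r with hx | hx
  · rw [bp_zero_of_lt hx]
    simpa using bp_mono r hr (by omega : y ≤ x + y)
  · rcases Nat.lt_or_ge y r with hy | hy
    · rw [bp_zero_of_lt hy]
      simpa using bp_mono r hr (by omega : x ≤ x + y)
    · calc bp r x + bp r y ≤ bp r (x + y - (r-1)) := bp_shift r hr x (by omega) y (by omega)
        _ ≤ bp r (x+y) := bp_mono r hr (by omega)

lemma sum_bp_le_bp_sum (r : ℕ) (hr : 1 ≤ r) {ι : Type*} (s : Finset ι) (a : ι → ℕ) :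
    ∑ i ∈ s, bp r (a i) ≤ bp r (∑ i ∈ s, a i) := by
  classical
  induction s using Finset.induction_on with
  | empty => simp [bp_zero_of_lt (by omega : 0 < r)]
  | insert _ _ hns ih =>
    rw [Finset.sum_insert hns, Finset.sum_insert hns]
    calc _ ≤ bp r (a _) + bp r (∑ i ∈ _, a i) := by exact Nat.add_le_add_left ih _
      _ ≤ _ := bp_superadd r hr _ _

/-- Lemma D: shifted superadditivity over a nonempty finite family. -/
lemma sum_bp_le_shift (r : ℕ) (hr : 1 ≤ r) {ι : Type*} [DecidableEq ι] :
    ∀ (s : Finset ι) (e : ι → ℕ), s.Nonempty → (∀ i ∈ s, r - 1 ≤ e i) →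
    ∑ i ∈ s, bp r (e i) ≤ bp r (∑ i ∈ s, e i - (r-1) * (s.card - 1)) := by
  intro s
  induction s using Finset.induction_on with
  | empty => intro e h; simp at h
  | @insert a t hat ih =>
    intro e _ hbd
    rcases t.eq_empty_or_nonempty with rfl | hne
    · simp
    · have hbt : ∀ i ∈ t, r - 1 ≤ e i := fun i hi => hbd i (Finset.mem_insert_of_mem hi)
      have hcard : 1 ≤ t.card := Finset.card_pos.mpr hne
      have hc1 : t.card - 1 + 1 = t.card := by omega
      have h8 : (r-1) * (t.card - 1) + (r-1) = (r-1) * t.card := by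
        conv_rhs => rw [← hc1]
        ring
      have hsum_t : (r-1) * t.card ≤ ∑ i ∈ t, e i := by
        calc (r-1) * t.card = t.card * (r-1) := by ring
          _ = t.card • (r-1) := by simp
          _ ≤ ∑ i ∈ t, e i := Finset.card_nsmul_le_sum t e (r-1) hbt
      rw [Finset.sum_insert hat, Finset.sum_insert hat]
      have ih' := ih e hne hbt
      have hshift := bp_shift r hr (e a) (hbd a (Finset.mem_insert_self a t))
          (∑ i ∈ t, e i - (r-1) * (t.card - 1)) (by omega)
      have hcards : (insert a t).card = t.card + 1 := Finset.card_insert_of_notMem hat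
      have harg : e a + (∑ i ∈ t, e i - (r-1) * (t.card - 1)) - (r-1)
          = e a + ∑ i ∈ t, e i - (r-1) * ((insert a t).card - 1) := by
        rw [hcards]
        have h9 : (r-1) * (t.card + 1 - 1) = (r-1) * t.card := by
          norm_num
        omega
      rw [harg] at hshift
      omega

/-- Lemma E: `a * bp (r-1) (S - a) ≤ bp r S` for `a * r ≤ S`. -/
lemma mul_bp_le (r : ℕ) (hr : 1 ≤ r) (S : ℕ) :
    ∀ d a, S / r - a = d → a * r ≤ S → a * bp (r-1) (S - a) ≤ bp r S := by
  intro d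
  induction d with
  | zero =>
    intro a hd hle
    have ha : a ≤ S / r := Nat.le_div_iff_mul_le (by omega) |>.mpr hle
    have : a = S / r := by omega
    subst this
    rw [bp_key r S hr]
  | succ d ih =>
    intro a hd hle
    have ha : a < S / r := by
      have := Nat.le_div_iff_mul_le (show 0 < r by omega) |>.mpr hle
      omega
    have ha1 : a + 1 ≤ S / r := by omega
    have ha1r : (a+1) * r ≤ S := (Nat.le_div_iff_mul_le (show 0 < r by omega)).mp ha1
    have hstep : a * bp (r-1) (S - a) ≤ (a+1) * bp (r-1) (S - (a+1)) := by
      rcases Nat.lt_or_ge r 2 with hr2 | hr2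
      · have : r = 1 := by omega
        subst this
        simp [bp]
      · obtain ⟨m, hm⟩ : ∃ m, m = S - a - 1 := ⟨_, rfl⟩
        have hSr : S / r ≤ S := Nat.div_le_self S r
        have hm1 : m + 1 = S - a := by omega
        have hratio := bp_ratio (r-1) m (by omega : 1 ≤ r - 1)
        obtain ⟨q', hq'⟩ : ∃ q', q' = m / (r-1) := ⟨_, rfl⟩
        rw [← hq'] at hratio
        have haq : a ≤ q' := by
          rw [hq']
          apply (Nat.le_div_iff_mul_le (by omega : 0 < r - 1)).mpr
          have har : a * r = a * (r - 1) + a := by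
            have hh : r = (r-1) + 1 := by omega
            conv_lhs => rw [hh]
            ring
          have hra : (a+1) * r = a * r + r := by ring
          omega
        rcases Nat.eq_zero_or_pos q' with hq0 | hq0
        · have : a = 0 := by omega
          subst this
          simp
        · refine Nat.le_of_mul_le_mul_left ?_ hq0
          have hSa1 : S - (a+1) = m := by omega
          rw [hSa1, ← hm1]
          calc q' * (a * bp (r-1) (m+1)) = a * (q' * bp (r-1) (m+1)) := by ring
            _ = a * ((q' + 1) * bp (r-1) m) := by rw [hratio]
            _ = (a * (q'+1)) * bp (r-1) m := by ring
            _ ≤ (q' * (a+1)) * bp (r-1) m := Nat.mul_le_mul_right _ (by nlinarith)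
            _ = q' * ((a+1) * bp (r-1) m) := by ring
    calc a * bp (r-1) (S - a) ≤ (a+1) * bp (r-1) (S - (a+1)) := hstep
      _ ≤ bp r S := ih (a+1) (by omega) ha1r

/-- product over a finset is at most the balanced product. -/
lemma prod_le_bp : ∀ (n : ℕ) {ι : Type} [DecidableEq ι] (s : Finset ι) (t : ι → ℕ),
    s.card = n → ∏ i ∈ s, t i ≤ bp n (∑ i ∈ s, t i) := by
  intro n
  induction n with
  | zero =>
    intro ι _ s t hs
    rw [Finset.card_eq_zero] at hs
    subst hs
    simp [bp]
  | succ n ih =>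
    intro ι _ s t hs
    have hne : s.Nonempty := Finset.card_pos.mp (by omega)
    obtain ⟨i0, hi0, hmin⟩ := s.exists_min_image t hne
    have hprod : ∏ i ∈ s, t i = t i0 * ∏ i ∈ s.erase i0, t i := (Finset.mul_prod_erase s t hi0).symm
    have hsum : ∑ i ∈ s, t i = t i0 + ∑ i ∈ s.erase i0, t i := (Finset.add_sum_erase s t hi0).symm
    have hcard : (s.erase i0).card = n := by
      rw [Finset.card_erase_of_mem hi0, hs]
      omega
    have hminle : t i0 * (n+1) ≤ ∑ i ∈ s, t i := by
      have h2 := Finset.card_nsmul_le_sum s t (t i0) hmin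
      rw [hs, smul_eq_mul] at h2
      calc t i0 * (n+1) = (n+1) * t i0 := by ring
        _ ≤ ∑ i ∈ s, t i := h2
    calc ∏ i ∈ s, t i = t i0 * ∏ i ∈ s.erase i0, t i := hprod
      _ ≤ t i0 * bp n (∑ i ∈ s.erase i0, t i) := Nat.mul_le_mul_left _ (ih _ t hcard)
      _ = t i0 * bp ((n+1)-1) ((∑ i ∈ s, t i) - t i0) := by
          have e1 : (n+1)-1 = n := by omega
          have e2 : (∑ i ∈ s, t i) - t i0 = ∑ i ∈ s.erase i0, t i := by omega
          rw [e1, e2]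
      _ ≤ bp (n+1) (∑ i ∈ s, t i) := mul_bp_le (n+1) (by omega) _ ((∑ i ∈ s, t i) / (n+1) - t i0) (t i0) rfl hminle

/-- Counting partial-rainbow cliques: if every member of `T` is a subset of `W` of size
`I.card` on which `p` is injective, and `p` maps `W` into `I`, then
`T.card ≤ bp I.card W.card`. -/
lemma transversal_bound {α ι : Type} [DecidableEq α] [DecidableEq ι]
    (W : Finset α) (p : α → ι) (I : Finset ι) (T : Finset (Finset α))
    (hW : ∀ w ∈ W, p w ∈ I)
    (hT : ∀ s ∈ T, s ⊆ W ∧ s.card = I.card ∧ ∀ x ∈ s, ∀ y ∈ s, x ≠ y → p x ≠ p y) :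
    T.card ≤ bp I.card W.card := by
  classical
  rcases T.eq_empty_or_nonempty with rfl | hTne
  · simp
  -- uniqueness of representatives
  have key : ∀ s ∈ T, ∀ i ∈ I, ∃! x, x ∈ s ∧ p x = i := by
    intro s hs i hi
    obtain ⟨hsub, hcard, hinj⟩ := hT s hs
    have himg : s.image p = I := by
      apply Finset.eq_of_subset_of_card_le
      · intro j hj
        obtain ⟨x, hx, rfl⟩ := Finset.mem_image.mp hj
        exact hW x (hsub hx)
      · rw [Finset.card_image_of_injOn (fun x hx y hy hne => by
          by_contra hxy
          exact hinj x hx y hy hxy hne)]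
        omega
    have : i ∈ s.image p := by rw [himg]; exact hi
    obtain ⟨x, hx, hpx⟩ := Finset.mem_image.mp this
    refine ⟨x, ⟨hx, hpx⟩, ?_⟩
    intro y ⟨hy, hpy⟩
    by_contra hne
    exact hinj y hy x hx hne (hpy.trans hpx.symm)
  by_cases hI : I = ∅
  · subst hI
    have : ∀ s ∈ T, s = ∅ := by
      intro s hs
      have := (hT s hs).2.1
      simpa [Finset.card_eq_zero] using this
    have hsub : T ⊆ {∅} := by
      intro s hs
      simp [this s hs]
    have : T.card ≤ 1 := by
      calc T.card ≤ ({∅} : Finset (Finset α)).card := Finset.card_le_card hsub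
        _ = 1 := Finset.card_singleton _
    simpa [bp] using this
  · obtain ⟨s0, hs0⟩ := hTne
    have hIne : I.Nonempty := Finset.nonempty_iff_ne_empty.mpr hI
    have hs0ne : s0.Nonempty := by
      rw [← Finset.card_pos, (hT s0 hs0).2.1]
      exact Finset.card_pos.mpr hIne
    have hαne : Nonempty α := ⟨hs0ne.choose⟩
    inhabit α
    -- the injection into the pi-set
    set Φ : Finset α → ((i : ι) → i ∈ I → α) := fun s => fun i hi =>
      if h : ∃! x, x ∈ s ∧ p x = i then h.choose else default with hΦ
    have hΦmem : ∀ s ∈ T, Φ s ∈ I.pi (fun i => W.filter (fun w => p w = i)) := by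
      intro s hs
      rw [Finset.mem_pi]
      intro i hi
      have h := key s hs i hi
      rw [hΦ]
      simp only [dif_pos h]
      obtain ⟨hxs, hpx⟩ := h.choose_spec.1
      exact Finset.mem_filter.mpr ⟨(hT s hs).1 hxs, hpx⟩
    have hΦinj : Set.InjOn Φ T := by
      intro s hs t ht heq
      have hsub : ∀ u v : Finset α, u ∈ T → v ∈ T → Φ u = Φ v → u ⊆ v := by
        intro u v hu hv huv x hx
        have hpx : p x ∈ I := hW x ((hT u hu).1 hx)
        have h := key u hu (p x) hpx
        have hx' : Φ u (p x) hpx = x := by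
          rw [hΦ]
          simp only [dif_pos h]
          exact (h.choose_spec.2 x ⟨hx, rfl⟩).symm
        have h' := key v hv (p x) hpx
        have hx'' : Φ v (p x) hpx ∈ v := by
          rw [hΦ]
          simp only [dif_pos h']
          exact h'.choose_spec.1.1
        rw [← hx', huv]
        exact hx''
      exact Finset.Subset.antisymm (hsub s t hs ht heq) (hsub t s ht hs heq.symm)
    calc T.card ≤ (I.pi (fun i => W.filter (fun w => p w = i))).card :=
          Finset.card_le_card_of_injOn Φ hΦmem hΦinj
      _ = ∏ i ∈ I, (W.filter (fun w => p w = i)).card := Finset.card_pi _ _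
      _ ≤ bp I.card (∑ i ∈ I, (W.filter (fun w => p w = i)).card) :=
          prod_le_bp I.card I _ rfl
      _ = bp I.card W.card := by
          congr 1
          exact (Finset.card_eq_sum_card_fiberwise hW).symm

theorem main_bound : ∀ (n k : ℕ), 3 ≤ k → k ≤ n → n ≤ k * (k-1) →
    ∀ (α : Type) [inst1 : DecidableEq α] [inst2 : Fintype α], Fintype.card α = n →
    ∀ (χ : α → α → ℕ),
    (∀ c : ℕ, ∃ p : α → Fin k, ∀ i j, i ≠ j → χ i j = c → p i ≠ p j) →
    ∀ [instd : DecidablePred (fun s : Finset α => s.card = k ∧ ∃ c, ∀ x ∈ s, ∀ y ∈ s, x ≠ y → χ x y = c)],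
    (Finset.filter (fun s : Finset α => s.card = k ∧ ∃ c, ∀ x ∈ s, ∀ y ∈ s, x ≠ y → χ x y = c) Finset.univ).card ≤ bp k n := by
  intro n
  induction n using Nat.strong_induction_on with
  | _ n ih =>
  intro k hk hkn hnk α inst1 inst2 hcardα χ hpart instd
  rcases eq_or_lt_of_le hkn with heq | hlt
  · -- base case n = k
    subst heq
    have hsub : Finset.filter (fun s : Finset α => s.card = k ∧ ∃ c, ∀ x ∈ s, ∀ y ∈ s, x ≠ y → χ x y = c) Finset.univ ⊆ {Finset.univ} := by
      intro s hs
      rw [Finset.mem_filter] at hs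
      rw [Finset.mem_singleton]
      apply Finset.eq_univ_of_card
      rw [hs.2.1, hcardα]
    calc _ ≤ ({Finset.univ} : Finset (Finset α)).card := Finset.card_le_card hsub
      _ = 1 := Finset.card_singleton _
      _ = bp k k := (bp_self (by omega)).symm
  · -- inductive step
    classical
    set T := Finset.filter (fun s : Finset α => s.card = k ∧ ∃ c, ∀ x ∈ s, ∀ y ∈ s, x ≠ y → χ x y = c) Finset.univ with hT
    by_contra hcon
    push_neg at hcon
    have hfex : ∀ s ∈ T, ∃ c, ∀ x ∈ s, ∀ y ∈ s, x ≠ y → χ x y = c := fun s hs => (Finset.mem_filter.mp hs).2.2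
    set f : Finset α → ℕ := fun s => if h : ∃ c, ∀ x ∈ s, ∀ y ∈ s, x ≠ y → χ x y = c then h.choose else 0 with hf
    have hfspec : ∀ s ∈ T, ∀ x ∈ s, ∀ y ∈ s, x ≠ y → χ x y = f s := by
      intro s hs
      have h := hfex s hs
      rw [hf]
      simp only [dif_pos h]
      exact h.choose_spec
    have hcardT : ∀ s ∈ T, s.card = k := fun s hs => (Finset.mem_filter.mp hs).2.1
    -- deletion bound
    have hdel : ∀ v : α, (T.filter (fun s => v ∉ s)).card ≤ bp k (n-1) := by
      intro v
      have hβ : Fintype.card {x : α // x ≠ v} = n - 1 := by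
        calc Fintype.card {x : α // x ≠ v} = Fintype.card α - Fintype.card {x : α // x = v} :=
              Fintype.card_subtype_compl _
          _ = n - 1 := by rw [hcardα, Fintype.card_subtype_eq]
      set χ' : {x : α // x ≠ v} → {x : α // x ≠ v} → ℕ := fun a b => χ a.1 b.1 with hχ'
      have hpart' : ∀ c, ∃ p : {x : α // x ≠ v} → Fin k, ∀ i j, i ≠ j → χ' i j = c → p i ≠ p j := by
        intro c
        obtain ⟨p, hp⟩ := hpart c
        exact ⟨fun a => p a.1, fun i j hij hc => hp i.1 j.1 (fun h => hij (Subtype.ext h)) hc⟩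
      have hIH := ih (n-1) (by omega) k hk (by omega) (by omega) {x : α // x ≠ v} hβ χ' hpart'
      refine le_trans (Finset.card_le_card_of_injOn (fun s => s.subtype (· ≠ v)) ?_ ?_) hIH
      · intro s hs
        rw [Finset.mem_coe, Finset.mem_filter] at hs
        obtain ⟨hsT, hvs⟩ := hs
        have hsT' := Finset.mem_filter.mp hsT
        have hall : ∀ x ∈ s, x ≠ v := fun x hx h => hvs (h ▸ hx)
        refine Finset.mem_filter.mpr ⟨Finset.mem_univ _, ?_, ?_⟩
        · rw [Finset.card_subtype, Finset.filter_true_of_mem hall]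
          exact hsT'.2.1
        · obtain ⟨c, hc⟩ := hsT'.2.2
          refine ⟨c, ?_⟩
          intro x hx y hy hxy
          rw [Finset.mem_subtype] at hx hy
          exact hc x.1 hx y.1 hy (fun h => hxy (Subtype.ext h))
      · intro s hs t ht heq
        have hmap : ∀ u : Finset α, u ∈ T.filter (fun s => v ∉ s) →
            (u.subtype (· ≠ v)).map (Function.Embedding.subtype _) = u := by
          intro u hu
          rw [Finset.subtype_map]
          apply Finset.filter_true_of_mem
          intro x hx h
          exact (Finset.mem_filter.mp hu).2 (h ▸ hx)
        rw [← hmap s hs, ← hmap t ht]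
        simp only at heq
        rw [heq]
    -- per-vertex degree lower bound
    have hsplitdel : ∀ v : α, bp (k-1) ((n-1) - (n-1)/k) + 1 ≤ (T.filter (fun s => v ∈ s)).card := by
      intro v
      have h1 := hdel v
      have hsplit := Finset.card_filter_add_card_filter_not (s := T) (p := fun s => v ∈ s)
      have hid : bp k n = bp k (n-1) + bp (k-1) ((n-1) - (n-1)/k) := by
        have h2 := bp_succ k (n-1) (by omega)
        have h3 : n - 1 + 1 = n := by omega
        rw [h3] at h2
        exact h2
      omega
    -- per-vertex dominating color
    have key : ∀ v : α, ∃ cv : ℕ, (∃ s ∈ T, v ∈ s) ∧ ∀ s ∈ T, v ∈ s → f s = cv := by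
      intro v
      set Tv := T.filter (fun s => v ∈ s) with hTv
      have hdv : bp (k-1) ((n-1) - (n-1)/k) + 1 ≤ Tv.card := hsplitdel v
      set Nv := Finset.univ.erase v with hNv
      set e : ℕ → ℕ := fun c => (Nv.filter (fun u => χ v u = c)).card with he
      set B := Nv.image (χ v) with hB
      have hNvcard : Nv.card = n - 1 := by
        rw [hNv, Finset.card_erase_of_mem (Finset.mem_univ v), Finset.card_univ, hcardα]
      have hesum : ∑ c ∈ B, e c = n - 1 := by
        rw [← hNvcard]
        exact (Finset.card_eq_sum_card_fiberwise (fun u hu => Finset.mem_image_of_mem _ hu)).symm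
      have hclique : ∀ s ∈ Tv, f s ∈ B ∧ k - 1 ≤ e (f s) := by
        intro s hs
        rw [hTv, Finset.mem_filter] at hs
        obtain ⟨hsT, hvs⟩ := hs
        have hsub : s.erase v ⊆ Nv.filter (fun u => χ v u = f s) := by
          intro u hu
          rw [Finset.mem_erase] at hu
          obtain ⟨huv, hus⟩ := hu
          refine Finset.mem_filter.mpr ⟨Finset.mem_erase.mpr ⟨huv, Finset.mem_univ u⟩, ?_⟩
          exact hfspec s hsT v hvs u hus (fun h => huv h.symm)
        have hcard : (s.erase v).card = k - 1 := by
          rw [Finset.card_erase_of_mem hvs, hcardT s hsT]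
        have he1 : k - 1 ≤ e (f s) := by
          calc k - 1 = (s.erase v).card := hcard.symm
            _ ≤ _ := Finset.card_le_card hsub
        have hne : (s.erase v).Nonempty := by
          rw [← Finset.card_pos, hcard]
          omega
        obtain ⟨u, hu⟩ := hne
        have hmem := hsub hu
        rw [Finset.mem_filter] at hmem
        exact ⟨by rw [hB]; exact Finset.mem_image.mpr ⟨u, hmem.1, hmem.2⟩, he1⟩
      have hdveq : Tv.card = ∑ c ∈ B, (Tv.filter (fun s => f s = c)).card :=
        Finset.card_eq_sum_card_fiberwise (fun s hs => (hclique s hs).1)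
      have hcolor : ∀ c, (Tv.filter (fun s => f s = c)).card ≤ bp (k-1) (e c) := by
        intro c
        obtain ⟨p, hp⟩ := hpart c
        have hinj : Set.InjOn (fun s : Finset α => s.erase v) ↑(Tv.filter (fun s => f s = c)) := by
          intro s hs t ht heq
          simp only [Finset.mem_coe, Finset.mem_filter, hTv] at hs ht
          simp only at heq
          rw [← Finset.insert_erase hs.1.2, ← Finset.insert_erase ht.1.2, heq]
        have hb := transversal_bound (α := α) (ι := Fin k)
            (Nv.filter (fun u => χ v u = c)) p (Finset.univ.erase (p v))
            ((Tv.filter (fun s => f s = c)).image (fun s => s.erase v))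
            (by
              intro w hw
              rw [Finset.mem_filter] at hw
              obtain ⟨hwNv, hχw⟩ := hw
              have hwv : w ≠ v := by
                rw [hNv] at hwNv
                exact (Finset.mem_erase.mp hwNv).1
              refine Finset.mem_erase.mpr ⟨?_, Finset.mem_univ _⟩
              exact (hp v w (fun h => hwv h.symm) hχw).symm)
            (by
              intro s' hs'
              obtain ⟨s, hs, rfl⟩ := Finset.mem_image.mp hs'
              rw [Finset.mem_filter] at hs
              obtain ⟨hsTv, hfsc⟩ := hs
              rw [hTv, Finset.mem_filter] at hsTv
              obtain ⟨hsT, hvs⟩ := hsTv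
              refine ⟨?_, ?_, ?_⟩
              · intro u hu
                rw [Finset.mem_erase] at hu
                refine Finset.mem_filter.mpr ⟨?_, ?_⟩
                · rw [hNv]; exact Finset.mem_erase.mpr ⟨hu.1, Finset.mem_univ _⟩
                · rw [← hfsc]
                  exact hfspec s hsT v hvs u hu.2 (fun h => hu.1 h.symm)
              · rw [Finset.card_erase_of_mem hvs, hcardT s hsT,
                  Finset.card_erase_of_mem (Finset.mem_univ _), Finset.card_univ, Fintype.card_fin]
              · intro x hx y hy hxy
                rw [Finset.mem_erase] at hx hy
                have hxy' := hfspec s hsT x hx.2 y hy.2 hxy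
                rw [hfsc] at hxy'
                exact hp x y hxy hxy')
        rw [Finset.card_image_of_injOn hinj,
          Finset.card_erase_of_mem (Finset.mem_univ _), Finset.card_univ, Fintype.card_fin] at hb
        exact hb
      set B' := B.filter (fun c => k - 1 ≤ e c) with hB'
      have hzero : ∀ c ∈ B, c ∉ B' → (Tv.filter (fun s => f s = c)).card = 0 := by
        intro c hcB hcB'
        rw [Finset.card_eq_zero, Finset.filter_eq_empty_iff]
        intro s hs hfs
        exact hcB' (Finset.mem_filter.mpr ⟨hcB, hfs ▸ (hclique s hs).2⟩)
      have hdvle : Tv.card ≤ ∑ c ∈ B', bp (k-1) (e c) := by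
        rw [hdveq, ← Finset.sum_subset (Finset.filter_subset _ B) (fun c hc hnc => hzero c hc hnc)]
        exact Finset.sum_le_sum (fun c _ => hcolor c)
      have hTvne : ∃ s ∈ T, v ∈ s := by
        have hpos : 0 < Tv.card := by omega
        obtain ⟨s, hs⟩ := Finset.card_pos.mp hpos
        rw [hTv, Finset.mem_filter] at hs
        exact ⟨s, hs.1, hs.2⟩
      have hB'ne : B'.Nonempty := by
        obtain ⟨s, hsT, hvs⟩ := hTvne
        have hs : s ∈ Tv := by rw [hTv, Finset.mem_filter]; exact ⟨hsT, hvs⟩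
        exact ⟨f s, Finset.mem_filter.mpr ⟨(hclique s hs).1, (hclique s hs).2⟩⟩
      have hB'card : B'.card = 1 := by
        by_contra hne1
        have h2 : 2 ≤ B'.card := by
          have := Finset.card_pos.mpr hB'ne
          omega
        have hsumB' : ∑ c ∈ B', e c ≤ n - 1 := by
          rw [← hesum]
          exact Finset.sum_le_sum_of_subset (Finset.filter_subset _ B)
        have hbound := sum_bp_le_shift (k-1) (by omega) B' e hB'ne (fun c hc => by
          have := (Finset.mem_filter.mp hc).2
          omega)
        have hdiv : (n-1)/k ≤ k - 2 := by
          have hlt2 : (n-1)/k < k - 1 := by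
            rw [Nat.div_lt_iff_lt_mul (by omega : 0 < k)]
            have : k * (k-1) = (k-1) * k := by ring
            omega
          omega
        have harg : ∑ c ∈ B', e c - ((k-1)-1) * (B'.card - 1) ≤ (n-1) - ((n-1)/k) := by
          have hmul : (k-2) * 1 ≤ ((k-1)-1) * (B'.card - 1) := by
            apply Nat.mul_le_mul <;> omega
          omega
        have hfinal : Tv.card ≤ bp (k-1) ((n-1) - (n-1)/k) :=
          le_trans hdvle (le_trans hbound (bp_mono (k-1) (by omega) harg))
        omega
      obtain ⟨cv, hcv⟩ := Finset.card_eq_one.mp hB'card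
      refine ⟨cv, hTvne, ?_⟩
      intro s hsT hvs
      have hs : s ∈ Tv := by rw [hTv, Finset.mem_filter]; exact ⟨hsT, hvs⟩
      have hmem : f s ∈ B' := Finset.mem_filter.mpr ⟨(hclique s hs).1, (hclique s hs).2⟩
      rw [hcv, Finset.mem_singleton] at hmem
      exact hmem
    -- global count
    choose dc hdc using key
    set C := T.image f with hC
    have hdcC : ∀ v, dc v ∈ C := by
      intro v
      obtain ⟨s, hsT, hvs⟩ := (hdc v).1
      rw [← (hdc v).2 s hsT hvs, hC]
      exact Finset.mem_image_of_mem f hsT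
    have hTsum : T.card = ∑ c ∈ C, (T.filter (fun s => f s = c)).card :=
      Finset.card_eq_sum_card_fiberwise (fun s hs => Finset.mem_image_of_mem f hs)
    have hVsum : ∑ c ∈ C, (Finset.univ.filter (fun v => dc v = c)).card = n := by
      rw [← hcardα, ← Finset.card_univ]
      exact (Finset.card_eq_sum_card_fiberwise (fun v _ => hdcC v)).symm
    have hTc : ∀ c ∈ C, (T.filter (fun s => f s = c)).card ≤
        bp k ((Finset.univ.filter (fun v => dc v = c)).card) := by
      intro c hc
      obtain ⟨p, hp⟩ := hpart c
      have hb := transversal_bound (α := α) (ι := Fin k)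
          (Finset.univ.filter (fun v => dc v = c)) p Finset.univ
          (T.filter (fun s => f s = c))
          (fun w _ => Finset.mem_univ _)
          (by
            intro s hs
            rw [Finset.mem_filter] at hs
            obtain ⟨hsT, hfc⟩ := hs
            refine ⟨?_, ?_, ?_⟩
            · intro x hx
              refine Finset.mem_filter.mpr ⟨Finset.mem_univ _, ?_⟩
              rw [← (hdc x).2 s hsT hx, hfc]
            · rw [hcardT s hsT, Finset.card_univ, Fintype.card_fin]
            · intro x hx y hy hxy
              have hxy' := hfspec s hsT x hx y hy hxy
              rw [hfc] at hxy'
              exact hp x y hxy hxy')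
      rw [Finset.card_univ, Fintype.card_fin] at hb
      exact hb
    have hfinal : T.card ≤ bp k n := by
      rw [hTsum]
      calc ∑ c ∈ C, (T.filter (fun s => f s = c)).card
          ≤ ∑ c ∈ C, bp k ((Finset.univ.filter (fun v => dc v = c)).card) :=
            Finset.sum_le_sum hTc
        _ ≤ bp k (∑ c ∈ C, (Finset.univ.filter (fun v => dc v = c)).card) :=
            sum_bp_le_bp_sum k (by omega) C _
        _ = bp k n := by rw [hVsum]
    omega

/-- For `3 ≤ k ≤ n ≤ k(k−1)`, any edge coloring of `K_n` whose color classes are all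
`k`-partite has at most `g_k(n)` monochromatic copies of `K_k`. -/
theorem stmt_17 (k n : ℕ) (hk : 3 ≤ k) (hn1 : k ≤ n) (hn2 : n ≤ k * (k - 1))
    (χ : Fin n → Fin n → ℕ)
    (hsymm : ∀ i j, χ i j = χ j i)
    (hpart : ∀ c : ℕ, ∃ p : Fin n → Fin k,
      ∀ i j : Fin n, i ≠ j → χ i j = c → p i ≠ p j) :
    Set.ncard {s : Finset (Fin n) | s.card = k ∧
      ∃ c : ℕ, ∀ x ∈ s, ∀ y ∈ s, x ≠ y → χ x y = c} ≤ gkBal k n := by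
  classical
  have hb := main_bound n k hk hn1 hn2 (Fin n) (Fintype.card_fin n) χ hpart
  have hset : {s : Finset (Fin n) | s.card = k ∧
      ∃ c : ℕ, ∀ x ∈ s, ∀ y ∈ s, x ≠ y → χ x y = c} =
      ↑(Finset.filter (fun s : Finset (Fin n) => s.card = k ∧
        ∃ c, ∀ x ∈ s, ∀ y ∈ s, x ≠ y → χ x y = c) Finset.univ) := by
    ext s
    simp
  rw [hset, Set.ncard_coe_finset]
  exact hb
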